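/- Let n = 2^s ≥ 4 and α ∈ F_{2^n} be a normal element of F_{2^n} over F_2. Let a_i = Tr_{2^n|2}(α^{1+2^i}) for 0 ≤ i ≤ n-1. Then a_0 = 1, a_{n/2} = 0, a_i = a_{n-i} for 1 ≤ i ≤ n/2-1, and Σ_{1 ≤ i ≤ n/2-1, i odd} a_i = 1. -/

import Mathlib

open Polynomial Finset

/-- Cyclic convolution: multiplication in `F[x]/(x^n - 1)` on coefficient vectors. -/
def cconv (n : ℕ) [NeZero n] {F : Type*} [CommRing F] (a b : ZMod n → F) : ZMod n → F :=
  fun k => ∑ i : ZMod n, a i * b (k - i)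

/-- Reciprocal polynomial `g*(z) = Σ b_i z^{n-i}` on coefficient vectors. -/
def cstar (n : ℕ) {F : Type*} (a : ZMod n → F) : ZMod n → F := fun i => a (-i)

/-- The polynomial `Σ_{i=0}^{n-1} a_i x^i` attached to a coefficient vector. -/
noncomputable def toPoly (n : ℕ) [NeZero n] {F : Type*} [CommRing F] (a : ZMod n → F) : Polynomial F :=
  ∑ i : Fin n, Polynomial.C (a ((i : ℕ) : ZMod n)) * Polynomial.X ^ (i : ℕ)

lemma zsum_eq {n : ℕ} [NeZero n] {M : Type*} [AddCommMonoid M] (G : ZMod n → M) :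
    ∑ z : ZMod n, G z = ∑ k ∈ Finset.range n, G (k : ZMod n) := by
  refine Finset.sum_nbij' (fun z => z.val) (fun k => (k : ZMod n)) ?_ ?_ ?_ ?_ ?_
  · intro z _; exact Finset.mem_range.2 z.val_lt
  · intro k _; exact Finset.mem_univ _
  · intro z _; exact ZMod.natCast_zmod_val z
  · intro k hk; exact ZMod.val_natCast_of_lt (Finset.mem_range.1 hk)
  · intro z _; rw [ZMod.natCast_zmod_val]

lemma shift_filter_sum {n : ℕ} [NeZero n] {M : Type*} [AddCommMonoid M]
    (p q : ZMod n → Prop) [DecidablePred p] [DecidablePred q] (c d : ZMod n)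
    (hcd : c + d = 0) (f g : ZMod n → M)
    (hpq : ∀ z, p z → q (z + c)) (hqp : ∀ z, q z → p (z + d))
    (hfg : ∀ z, p z → f z = g (z + c)) :
    ∑ z ∈ Finset.univ.filter p, f z = ∑ z ∈ Finset.univ.filter q, g z := by
  refine Finset.sum_nbij' (fun z => z + c) (fun z => z + d) ?_ ?_ ?_ ?_ ?_
  · intro z hz
    exact Finset.mem_filter.2 ⟨Finset.mem_univ _, hpq z (Finset.mem_filter.1 hz).2⟩
  · intro z hz
    exact Finset.mem_filter.2 ⟨Finset.mem_univ _, hqp z (Finset.mem_filter.1 hz).2⟩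
  · intro z _; show z + c + d = z; rw [add_assoc, hcd, add_zero]
  · intro z _; show z + d + c = z; rw [add_assoc, add_comm d c, hcd, add_zero]
  · intro z hz; exact hfg z (Finset.mem_filter.1 hz).2

lemma trace_form (n : ℕ) (K : Type*) [Field K] [Algebra (ZMod 2) K]
    [FiniteDimensional (ZMod 2) K] (hK : Module.finrank (ZMod 2) K = n)
    (α : K) (b : Module.Basis (Fin n) (ZMod 2) K) (hb : ∀ i : Fin n, b i = α ^ 2 ^ (i : ℕ))
    (x : K) :
    algebraMap (ZMod 2) K (Algebra.trace (ZMod 2) K x) = ∑ k ∈ Finset.range n, x ^ 2 ^ k := by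
  haveI : Finite K := Module.finite_of_finite (ZMod 2)
  haveI : CharP K 2 := charP_of_injective_algebraMap (algebraMap (ZMod 2) K).injective 2
  haveI : ExpChar K 2 := ExpChar.prime Nat.prime_two
  let ψ : K ≃ₐ[ZMod 2] K := AlgEquiv.ofRingEquiv (f := frobeniusEquiv K 2)
    (fun r => by
      have h2 : r ^ 2 = r := by revert r; decide
      rw [frobeniusEquiv_def, ← map_pow, h2])
  have hψ : ∀ (i : ℕ) (y : K), (ψ ^ i) y = y ^ 2 ^ i := by
    intro i
    induction i with
    | zero => intro y; simp
    | succ i ih =>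
      intro y
      have hy : ψ y = y ^ 2 := rfl
      rw [pow_succ, AlgEquiv.mul_apply, ih, hy, ← pow_mul]
      ring_nf
  have hinj : Function.Injective (fun i : Fin n => ψ ^ (i : ℕ)) := by
    intro i j hij
    have hij' := congrArg (fun σ : K ≃ₐ[ZMod 2] K => σ α) hij
    have : α ^ 2 ^ (i : ℕ) = α ^ 2 ^ (j : ℕ) := by
      rw [← hψ i α, ← hψ j α]; exact hij'
    have hbij : b i = b j := by rw [hb, hb, this]
    exact b.injective hbij
  have hbij : Function.Bijective (fun i : Fin n => ψ ^ (i : ℕ)) := by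
    rw [Fintype.bijective_iff_injective_and_card]
    refine ⟨hinj, ?_⟩
    rw [Fintype.card_fin, ← Nat.card_eq_fintype_card, IsGalois.card_aut_eq_finrank, hK]
  rw [trace_eq_sum_automorphisms]
  rw [← Fintype.sum_bijective _ hbij _ (fun σ => σ x) (fun i => rfl)]
  rw [← Fin.sum_univ_eq_sum_range (fun k => x ^ 2 ^ k) n]
  exact Finset.sum_congr rfl (fun i _ => hψ i x)

theorem stmt_9 (n s : ℕ) (hs : 2 ≤ s) (hn : n = 2 ^ s)
    (K : Type*) [Field K] [Algebra (ZMod 2) K] [FiniteDimensional (ZMod 2) K]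
    (hK : Module.finrank (ZMod 2) K = n)
    (α : K) (hα : ∃ b : Module.Basis (Fin n) (ZMod 2) K, ∀ i : Fin n, b i = α ^ 2 ^ (i : ℕ))
    (a : ℕ → ZMod 2)
    (ha : ∀ i : ℕ, a i = Algebra.trace (ZMod 2) K (α * α ^ 2 ^ i)) :
    a 0 = 1 ∧ a (n / 2) = 0 ∧
      (∀ i : ℕ, 1 ≤ i → i ≤ n / 2 - 1 → a i = a (n - i)) ∧
      ∑ i ∈ (Finset.Ico 1 (n / 2)).filter (fun i => Odd i), a i = 1 := by
  obtain ⟨b, hb⟩ := hα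
  obtain ⟨t, rfl⟩ : ∃ t, s = t + 2 := ⟨s - 2, by omega⟩
  have hpt : 0 < 2 ^ t := Nat.pow_pos (by norm_num)
  have h4 : n = 4 * 2 ^ t := by rw [hn]; ring
  have hn0 : 0 < n := by omega
  haveI : NeZero n := ⟨by omega⟩
  have hm0 : 0 < n / 2 := by omega
  have hmn : n / 2 < n := by omega
  have hdvd2 : 2 ∣ n := by omega
  have hmeven : 2 ∣ (n / 2) := by omega
  have hn2m : n = 2 * (n / 2) := by omega
  haveI : Finite K := Module.finite_of_finite (ZMod 2)
  haveI : CharP K 2 := charP_of_injective_algebraMap (algebraMap (ZMod 2) K).injective 2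
  haveI : ExpChar K 2 := ExpChar.prime Nat.prime_two
  have inj : Function.Injective (algebraMap (ZMod 2) K) := (algebraMap (ZMod 2) K).injective
  have htr := trace_form n K hK α b hb
  -- α ^ 2 ^ n = α
  haveI : Fintype K := Fintype.ofFinite K
  have hcardK : Fintype.card K = 2 ^ n := by
    have h := Module.card_eq_pow_finrank (K := ZMod 2) (V := K)
    rwa [ZMod.card, hK] at h
  have hαn : α ^ 2 ^ n = α := by
    have := FiniteField.pow_card α
    rwa [hcardK] at this
  have hmod : ∀ j : ℕ, α ^ 2 ^ (j % n) = α ^ 2 ^ j := by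
    have hper : ∀ q : ℕ, α ^ 2 ^ (n * q) = α := by
      intro q
      induction q with
      | zero => simp
      | succ q ih =>
        have h1 : n * (q + 1) = n * q + n := by ring
        rw [h1, pow_add, pow_mul, ih, hαn]
    intro j
    have hj : α ^ 2 ^ j = (α ^ 2 ^ (n * (j / n))) ^ 2 ^ (j % n) := by
      rw [← pow_mul, ← pow_add, Nat.div_add_mod]
    rw [hj, hper]
  set e : ZMod n → K := fun z => α ^ 2 ^ z.val with he
  have hecast : ∀ k : ℕ, e ((k : ℕ) : ZMod n) = α ^ 2 ^ k := by
    intro k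
    show α ^ 2 ^ ((k : ZMod n)).val = α ^ 2 ^ k
    rw [ZMod.val_natCast]
    exact hmod k
  have hval_add : ∀ (z : ZMod n) (c : ℕ), (z + (c : ZMod n)).val = (z.val + c) % n := by
    intro z c
    rw [ZMod.val_add, ZMod.val_natCast]
    conv_rhs => rw [Nat.add_mod]
    rw [Nat.mod_eq_of_lt z.val_lt]
  have hepow : ∀ (z : ZMod n) (c : ℕ), e z ^ 2 ^ c = e (z + (c : ZMod n)) := by
    intro z c
    show (α ^ 2 ^ z.val) ^ 2 ^ c = α ^ 2 ^ (z + (c : ZMod n)).val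
    rw [hval_add, hmod, ← pow_mul, ← pow_add]
  have he2 : ∀ z : ZMod n, e z ^ 2 = e (z + 1) := by
    intro z
    have := hepow z 1
    simpa using this
  have hpar2 : ∀ z w : ZMod n, (z + w).val % 2 = (z.val + w.val) % 2 := by
    intro z w
    rw [ZMod.val_add]
    exact Nat.mod_mod_of_dvd _ hdvd2
  have hparneg : ∀ z w : ZMod n, (z + -w).val % 2 = (z.val + w.val) % 2 := by
    intro z w
    have h := hpar2 (z + -w) w
    rw [neg_add_cancel_right] at h
    omega
  have hvalcast : ∀ k : ℕ, k < n → ((k : ZMod n)).val = k := fun k hk => ZMod.val_natCast_of_lt hk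
  have ha' : ∀ i : ℕ, algebraMap (ZMod 2) K (a i)
      = ∑ z : ZMod n, e z * e (z + (i : ZMod n)) := by
    intro i
    rw [ha i, htr, zsum_eq (fun z => e z * e (z + (i : ZMod n)))]
    refine Finset.sum_congr rfl (fun k _ => ?_)
    rw [mul_pow, hecast k]
    have h1 : (α ^ 2 ^ i) ^ 2 ^ k = α ^ 2 ^ (i + k) := by
      rw [← pow_mul, ← pow_add]
    rw [h1, ← hecast (i + k)]
    have : ((i + k : ℕ) : ZMod n) = (k : ZMod n) + (i : ZMod n) := by
      push_cast; ring
    rw [this]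
  have hsum1 : ∑ z : ZMod n, e z = 1 := by
    have h1 : algebraMap (ZMod 2) K (Algebra.trace (ZMod 2) K α) = ∑ z : ZMod n, e z := by
      rw [htr, zsum_eq e]
      exact Finset.sum_congr rfl (fun k _ => (hecast k).symm)
    have hne : (∑ z : ZMod n, e z) ≠ 0 := by
      have hbsum : ∑ z : ZMod n, e z = ∑ i : Fin n, b i := by
        rw [zsum_eq e, ← Fin.sum_univ_eq_sum_range (fun k => e ((k : ℕ) : ZMod n)) n]
        exact Finset.sum_congr rfl (fun i _ => by rw [hecast, hb])
      rw [hbsum]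
      intro h0
      have hli := Fintype.linearIndependent_iff.mp b.linearIndependent (fun _ => (1 : ZMod 2))
      have h1' : ∑ i : Fin n, (1 : ZMod 2) • b i = 0 := by simpa using h0
      exact one_ne_zero (hli h1' ⟨0, hn0⟩)
    have htα : Algebra.trace (ZMod 2) K α = 1 := by
      have h2 : ∀ x : ZMod 2, x ≠ 0 → x = 1 := by decide
      apply h2
      intro h0
      rw [h0, map_zero] at h1
      exact hne h1.symm
    rw [htα, map_one] at h1
    exact h1.symm
  classical
  have hval1 : (1 : ZMod n).val = 1 := by
    rw [← Nat.cast_one, hvalcast 1 (by omega)]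
  refine ⟨?_, ?_, ?_, ?_⟩
  · -- a 0 = 1
    apply inj
    rw [map_one, ha' 0]
    calc ∑ z : ZMod n, e z * e (z + ((0 : ℕ) : ZMod n))
        = ∑ z : ZMod n, e (z + 1) := by
          refine Finset.sum_congr rfl (fun z _ => ?_)
          rw [Nat.cast_zero, add_zero, ← he2 z, sq]
      _ = ∑ z : ZMod n, e z := by
          have h := Equiv.sum_comp (Equiv.addRight (1 : ZMod n)) e
          simpa using h
      _ = 1 := hsum1
  · -- a (n/2) = 0
    apply inj
    rw [map_zero, ha' (n / 2)]
    have hmm : ((n / 2 : ℕ) : ZMod n) + ((n / 2 : ℕ) : ZMod n) = 0 := by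
      rw [← Nat.cast_add, (show n / 2 + n / 2 = n by omega), ZMod.natCast_self]
    have hmne : ((n / 2 : ℕ) : ZMod n) ≠ 0 := by
      intro h
      have := hvalcast (n / 2) hmn
      rw [h, ZMod.val_zero] at this
      omega
    refine Finset.sum_ninvolution (fun z => z + ((n / 2 : ℕ) : ZMod n)) ?_ ?_
      (fun _ => Finset.mem_univ _) ?_
    · intro z
      have hz : z + ((n / 2 : ℕ) : ZMod n) + ((n / 2 : ℕ) : ZMod n) = z := by
        rw [add_assoc, hmm, add_zero]
      show e z * e (z + _) + e (z + _) * e (z + _ + _) = 0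
      rw [hz, mul_comm (e (z + ((n / 2 : ℕ) : ZMod n))) (e z)]
      exact CharTwo.add_self_eq_zero _
    · intro z _
      intro hzz
      exact hmne (by rwa [add_eq_left] at hzz)
    · intro z
      show z + _ + _ = z
      rw [add_assoc, hmm, add_zero]
  · -- a i = a (n - i)
    intro i hi1 hi2
    apply inj
    rw [ha' i, ha' (n - i)]
    have hcast : ((n - i : ℕ) : ZMod n) = -(i : ZMod n) := by
      have hadd : ((n - i : ℕ) : ZMod n) + ((i : ℕ) : ZMod n) = 0 := by
        rw [← Nat.cast_add, (show n - i + i = n by omega), ZMod.natCast_self]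
      exact eq_neg_of_add_eq_zero_left hadd
    rw [hcast]
    have h := Equiv.sum_comp (Equiv.addRight ((i : ℕ) : ZMod n))
      (fun z => e z * e (z + -((i : ℕ) : ZMod n)))
    rw [← h]
    refine Finset.sum_congr rfl (fun z _ => ?_)
    show e z * e (z + ((i : ℕ) : ZMod n)) =
      e (z + ((i : ℕ) : ZMod n)) * e (z + ((i : ℕ) : ZMod n) + -((i : ℕ) : ZMod n))
    rw [(show z + ((i : ℕ) : ZMod n) + -((i : ℕ) : ZMod n) = z by ring), mul_comm]
  · -- main sum
    have hfe : (Finset.univ.filter (fun z : ZMod n => z.val % 2 = 0))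
        = Finset.univ.filter (fun z : ZMod n => ¬ (z.val % 2 = 1)) := by
      apply Finset.filter_congr
      intro z _
      omega
    set u : K := ∑ z ∈ Finset.univ.filter (fun z : ZMod n => z.val % 2 = 1), e z with hu
    set v : K := ∑ z ∈ Finset.univ.filter (fun z : ZMod n => z.val % 2 = 0), e z with hv
    have huv : u + v = 1 := by
      rw [hu, hv, ← hsum1, hfe, Finset.sum_filter_add_sum_filter_not]
    have hu2 : u ^ 2 = v := by
      rw [hu, sum_pow_char, hv]
      refine shift_filter_sum _ _ 1 (-1) (by ring) _ _ ?_ ?_ ?_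
      · intro z hz
        have h := hpar2 z 1
        rw [hval1] at h
        omega
      · intro z hz
        have h := hparneg z 1
        rw [hval1] at h
        omega
      · intro z _
        exact he2 z
    have h2K : (2 : K) = 0 := CharTwo.two_eq_zero
    have huv1 : u * v = 1 := by
      rw [← hu2] at huv ⊢
      linear_combination (u - 1) * huv + (u - 1) * h2K
    set O := (Finset.Ico 1 (n / 2)).filter (fun i => Odd i) with hO
    have hObound : ∀ i ∈ O, 1 ≤ i ∧ i < n / 2 ∧ i % 2 = 1 := by
      intro i hi
      rw [hO, Finset.mem_filter, Finset.mem_Ico, Nat.odd_iff] at hi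
      exact ⟨hi.1.1, hi.1.2, hi.2⟩
    set G : ZMod n → K := fun d => ∑ w ∈ Finset.univ.filter (fun z : ZMod n => z.val % 2 = 0),
      e w * e (w + d) with hG
    have h1 : v * u = ∑ w ∈ Finset.univ.filter (fun z : ZMod n => z.val % 2 = 0),
        ∑ z ∈ Finset.univ.filter (fun z : ZMod n => z.val % 2 = 1), e w * e z := by
      rw [hv, hu, Finset.sum_mul_sum]
    have h2 : ∀ w : ZMod n, w.val % 2 = 0 →
        (∑ z ∈ Finset.univ.filter (fun z : ZMod n => z.val % 2 = 1), e w * e z)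
          = ∑ d ∈ Finset.univ.filter (fun z : ZMod n => z.val % 2 = 1), e w * e (w + d) := by
      intro w hw
      refine shift_filter_sum _ _ (-w) w (by ring) _ _ ?_ ?_ ?_
      · intro z hz
        have h := hparneg z w
        omega
      · intro z hz
        have h := hpar2 z w
        omega
      · intro z _
        have : w + (z + -w) = z := by ring
        rw [this]
    have h3 : v * u = ∑ d ∈ Finset.univ.filter (fun z : ZMod n => z.val % 2 = 1), G d := by
      rw [h1, Finset.sum_congr rfl (fun w hw => h2 w (Finset.mem_filter.1 hw).2),
        Finset.sum_comm]
    have hnegcast : ∀ i : ℕ, 1 ≤ i → i < n / 2 → -((i : ℕ) : ZMod n) = ((n - i : ℕ) : ZMod n) := by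
      intro i h1i h2i
      have hadd : ((i : ℕ) : ZMod n) + ((n - i : ℕ) : ZMod n) = 0 := by
        rw [← Nat.cast_add, (show i + (n - i) = n by omega), ZMod.natCast_self]
      exact neg_eq_of_add_eq_zero_left (by rw [add_comm]; exact hadd)
    have hvalneg : ∀ i : ℕ, 1 ≤ i → i < n / 2 → (-((i : ℕ) : ZMod n)).val = n - i := by
      intro i h1i h2i
      rw [hnegcast i h1i h2i, hvalcast (n - i) (by omega)]
    have hsplit : Finset.univ.filter (fun z : ZMod n => z.val % 2 = 1)
        = (O.image (fun i : ℕ => ((i : ℕ) : ZMod n))) ∪ (O.image (fun i : ℕ => -((i : ℕ) : ZMod n))) := by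
      ext z
      simp only [Finset.mem_filter, Finset.mem_univ, true_and, Finset.mem_union,
        Finset.mem_image]
      constructor
      · intro hz
        have hvlt : z.val < n := z.val_lt
        by_cases hcase : z.val < n / 2
        · left
          refine ⟨z.val, ?_, ZMod.natCast_zmod_val z⟩
          rw [hO, Finset.mem_filter, Finset.mem_Ico, Nat.odd_iff]
          omega
        · right
          refine ⟨n - z.val, ?_, ?_⟩
          · rw [hO, Finset.mem_filter, Finset.mem_Ico, Nat.odd_iff]
            omega
          · rw [hnegcast (n - z.val) (by omega) (by omega),
              (show n - (n - z.val) = z.val by omega), ZMod.natCast_zmod_val]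
      · rintro (⟨i, hi, rfl⟩ | ⟨i, hi, rfl⟩)
        · obtain ⟨h1i, h2i, h3i⟩ := hObound i hi
          rw [hvalcast i (by omega)]
          exact h3i
        · obtain ⟨h1i, h2i, h3i⟩ := hObound i hi
          rw [hvalneg i h1i h2i]
          omega
    have hdisj : Disjoint (O.image (fun i : ℕ => ((i : ℕ) : ZMod n)))
        (O.image (fun i : ℕ => -((i : ℕ) : ZMod n))) := by
      rw [Finset.disjoint_left]
      intro z hz1 hz2
      obtain ⟨i, hi, hzi⟩ := Finset.mem_image.1 hz1
      obtain ⟨j, hj, hzj⟩ := Finset.mem_image.1 hz2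
      obtain ⟨h1i, h2i, _⟩ := hObound i hi
      obtain ⟨h1j, h2j, _⟩ := hObound j hj
      have hvz : z.val = i := by rw [← hzi, hvalcast i (by omega)]
      have hvz' : z.val = n - j := by rw [← hzj, hvalneg j h1j h2j]
      omega
    have hinj1 : ∀ x ∈ O, ∀ y ∈ O, ((x : ℕ) : ZMod n) = ((y : ℕ) : ZMod n) → x = y := by
      intro x hx y hy hxy
      obtain ⟨h1x, h2x, _⟩ := hObound x hx
      obtain ⟨h1y, h2y, _⟩ := hObound y hy
      have := congrArg ZMod.val hxy
      rwa [hvalcast x (by omega), hvalcast y (by omega)] at this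
    have hinj2 : ∀ x ∈ O, ∀ y ∈ O, -((x : ℕ) : ZMod n) = -((y : ℕ) : ZMod n) → x = y := by
      intro x hx y hy hxy
      exact hinj1 x hx y hy (neg_inj.1 hxy)
    have hsum_split : ∑ d ∈ Finset.univ.filter (fun z : ZMod n => z.val % 2 = 1), G d
        = ∑ i ∈ O, G ((i : ℕ) : ZMod n) + ∑ i ∈ O, G (-((i : ℕ) : ZMod n)) := by
      rw [hsplit, Finset.sum_union hdisj, Finset.sum_image hinj1, Finset.sum_image hinj2]
    have hGneg : ∀ i ∈ O, G (-((i : ℕ) : ZMod n))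
        = ∑ z ∈ Finset.univ.filter (fun z : ZMod n => z.val % 2 = 1),
            e z * e (z + ((i : ℕ) : ZMod n)) := by
      intro i hi
      obtain ⟨h1i, h2i, h3i⟩ := hObound i hi
      have hvi : ((i : ℕ) : ZMod n).val = i := hvalcast i (by omega)
      refine shift_filter_sum _ _ (-((i : ℕ) : ZMod n)) ((i : ℕ) : ZMod n) (by ring) _ _ ?_ ?_ ?_
      · intro w hw
        have h := hparneg w ((i : ℕ) : ZMod n)
        rw [hvi] at h
        omega
      · intro z hz
        have h := hpar2 z ((i : ℕ) : ZMod n)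
        rw [hvi] at h
        omega
      · intro w _
        show e w * e (w + -((i : ℕ) : ZMod n)) =
          e (w + -((i : ℕ) : ZMod n)) * e ((w + -((i : ℕ) : ZMod n)) + ((i : ℕ) : ZMod n))
        rw [(show w + -((i : ℕ) : ZMod n) + ((i : ℕ) : ZMod n) = w by ring), mul_comm]
    have hfinal : v * u = ∑ i ∈ O, ∑ z : ZMod n, e z * e (z + ((i : ℕ) : ZMod n)) := by
      rw [h3, hsum_split, ← Finset.sum_add_distrib]
      refine Finset.sum_congr rfl (fun i hi => ?_)
      rw [hGneg i hi, hG]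
      rw [← Finset.sum_filter_add_sum_filter_not Finset.univ (fun z : ZMod n => z.val % 2 = 0)
        (fun z => e z * e (z + ((i : ℕ) : ZMod n)))]
      congr 1
      apply Finset.sum_congr ?_ (fun _ _ => rfl)
      apply Finset.filter_congr
      intro z _
      omega
    apply inj
    rw [map_one, map_sum]
    calc ∑ i ∈ O, algebraMap (ZMod 2) K (a i)
        = ∑ i ∈ O, ∑ z : ZMod n, e z * e (z + ((i : ℕ) : ZMod n)) :=
          Finset.sum_congr rfl (fun i _ => ha' i)
      _ = v * u := hfinal.symm
      _ = 1 := by rw [mul_comm]; exact huv1
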